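/- Let (Ω, F, P) be a probability space, let Δ : Ω → ℝ² be a random vector with E[‖Δ‖⁴] < ∞, E[Δ] = 0, and E[Δⱼ Δₖ] = σ² · δⱼₖ for all j, k ∈ {1,2} (i.e. the covariance matrix of Δ is σ² times the 2×2 identity), where σ ≥ 0. Let g ∈ ℝ² be a fixed vector, let C ≥ 0, let r : Ω → ℝ be measurable with |r(ω)| ≤ C‖Δ(ω)‖² almost surely, and set e := −⟨g, Δ⟩ + r. Then σ² ‖g‖² ≤ E[e²] + E[2C‖g‖‖Δ‖³ + C²‖Δ‖⁴]. -/

import Mathlib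

open MeasureTheory

theorem stmt0 {Ω : Type*} [MeasureSpace Ω] [IsProbabilityMeasure (volume : Measure Ω)]
    (Δ : Ω → EuclideanSpace ℝ (Fin 2)) (hΔmeas : Measurable Δ)
    (hΔ4 : Integrable (fun ω => ‖Δ ω‖ ^ 4))
    (hmean : (∫ ω, Δ ω) = 0)
    (σ : ℝ) (hσ : 0 ≤ σ)
    (hcov : ∀ j k : Fin 2, (∫ ω, Δ ω j * Δ ω k) = σ ^ 2 * (if j = k then (1 : ℝ) else 0))
    (g : EuclideanSpace ℝ (Fin 2)) (C : ℝ) (hC : 0 ≤ C)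
    (r : Ω → ℝ) (hrmeas : Measurable r)
    (hr : ∀ᵐ ω, |r ω| ≤ C * ‖Δ ω‖ ^ 2)
    (e : Ω → ℝ) (he : ∀ ω, e ω = -(inner ℝ g (Δ ω) : ℝ) + r ω) :
    σ ^ 2 * ‖g‖ ^ 2 ≤
      (∫ ω, (e ω) ^ 2) + ∫ ω, (2 * C * ‖g‖ * ‖Δ ω‖ ^ 3 + C ^ 2 * ‖Δ ω‖ ^ 4) := by
  -- measurability facts
  have hnorm : Measurable fun ω => ‖Δ ω‖ := hΔmeas.norm
  have hcoord : ∀ j : Fin 2, Measurable fun ω => Δ ω j := fun j =>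
    (EuclideanSpace.proj j).continuous.measurable.comp hΔmeas
  have hcoord_le : ∀ (ω) (j : Fin 2), |Δ ω j| ≤ ‖Δ ω‖ := by
    intro ω j
    have := EuclideanSpace.norm_eq (Δ ω)
    rw [this]
    have h1 : |Δ ω j| = Real.sqrt ((Δ ω j)^2) := by
      rw [Real.sqrt_sq_eq_abs]
    rw [h1]
    apply Real.sqrt_le_sqrt
    have : (Δ ω j)^2 = ‖Δ ω j‖^2 := by simp [Real.norm_eq_abs, sq_abs]
    rw [this]
    exact Finset.single_le_sum (f := fun i => ‖Δ ω i‖^2) (fun i _ => sq_nonneg _)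
      (Finset.mem_univ j)
  -- integrability facts
  have hInt2 : Integrable fun ω => ‖Δ ω‖ ^ 2 := by
    refine (hΔ4.add (integrable_const 1)).mono
      ((hnorm.pow_const 2).aestronglyMeasurable) (Filter.Eventually.of_forall fun ω => ?_)
    have h0 : (0:ℝ) ≤ ‖Δ ω‖ := norm_nonneg _
    simp only [Pi.add_apply, Real.norm_eq_abs]
    rw [abs_of_nonneg (by positivity), abs_of_nonneg (by positivity)]
    nlinarith [sq_nonneg (‖Δ ω‖^2 - 1)]
  have hInt3 : Integrable fun ω => ‖Δ ω‖ ^ 3 := by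
    refine (hΔ4.add (integrable_const 1)).mono
      ((hnorm.pow_const 3).aestronglyMeasurable) (Filter.Eventually.of_forall fun ω => ?_)
    have h0 : (0:ℝ) ≤ ‖Δ ω‖ := norm_nonneg _
    simp only [Pi.add_apply, Real.norm_eq_abs]
    rw [abs_of_nonneg (by positivity), abs_of_nonneg (by positivity)]
    rcases le_or_gt (‖Δ ω‖) 1 with h | h
    · nlinarith [pow_le_one₀ h0 h (n := 3)]
    · nlinarith [one_le_pow₀ h.le (n := 3), pow_le_pow_right₀ h.le (by norm_num : 3 ≤ 4)]
  have hIntjk : ∀ j k : Fin 2, Integrable fun ω => Δ ω j * Δ ω k := by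
    intro j k
    refine hInt2.mono (((hcoord j).mul (hcoord k)).aestronglyMeasurable)
      (Filter.Eventually.of_forall fun ω => ?_)
    rw [Real.norm_eq_abs, Real.norm_eq_abs, abs_mul, abs_of_nonneg (by positivity : (0:ℝ) ≤ ‖Δ ω‖^2)]
    calc |Δ ω j| * |Δ ω k| ≤ ‖Δ ω‖ * ‖Δ ω‖ :=
          mul_le_mul (hcoord_le ω j) (hcoord_le ω k) (abs_nonneg _) (norm_nonneg _)
      _ = ‖Δ ω‖^2 := (sq (‖Δ ω‖)).symm
  -- E[⟨g,Δ⟩²] = σ² ‖g‖²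
  have hinner : ∀ ω, (inner ℝ g (Δ ω) : ℝ) = ∑ j : Fin 2, g j * Δ ω j := by
    intro ω
    rw [real_inner_comm]
    simp [PiLp.inner_apply, RCLike.inner_apply, mul_comm]
  have hInta2 : Integrable fun ω => (inner ℝ g (Δ ω) : ℝ)^2 := by
    have : (fun ω => (inner ℝ g (Δ ω) : ℝ)^2) =
        fun ω => ∑ j : Fin 2, ∑ k : Fin 2, (g j * g k) * (Δ ω j * Δ ω k) := by
      funext ω
      rw [hinner, sq, Finset.sum_mul_sum]
      exact Finset.sum_congr rfl fun j _ => Finset.sum_congr rfl fun k _ => by ring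
    rw [this]
    exact integrable_finset_sum _ fun j _ =>
      integrable_finset_sum _ fun k _ => (hIntjk j k).const_mul _
  have hEa2 : (∫ ω, (inner ℝ g (Δ ω) : ℝ)^2) = σ^2 * ‖g‖^2 := by
    have h1 : (∫ ω, (inner ℝ g (Δ ω) : ℝ)^2) =
        ∫ ω, ∑ j : Fin 2, ∑ k : Fin 2, (g j * g k) * (Δ ω j * Δ ω k) := by
      congr 1; funext ω
      rw [hinner, sq, Finset.sum_mul_sum]
      exact Finset.sum_congr rfl fun j _ => Finset.sum_congr rfl fun k _ => by ring
    rw [h1, integral_finset_sum _ (fun j _ =>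
      integrable_finset_sum _ fun k _ => (hIntjk j k).const_mul _)]
    have h2 : ∀ j : Fin 2, (∫ ω, ∑ k : Fin 2, (g j * g k) * (Δ ω j * Δ ω k)) =
        ∑ k : Fin 2, (g j * g k) * (σ ^ 2 * (if j = k then (1:ℝ) else 0)) := by
      intro j
      rw [integral_finset_sum _ (fun k _ => (hIntjk j k).const_mul _)]
      refine Finset.sum_congr rfl fun k _ => ?_
      rw [integral_const_mul, hcov j k]
    rw [Finset.sum_congr rfl fun j _ => h2 j]
    have hg : ‖g‖^2 = ∑ j : Fin 2, g j * g j := by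
      rw [← real_inner_self_eq_norm_sq]
      simp only [PiLp.inner_apply, RCLike.inner_apply, conj_trivial]
    rw [hg, Finset.mul_sum]
    refine Finset.sum_congr rfl fun j _ => ?_
    rw [Fin.sum_univ_two]
    fin_cases j <;> simp <;> ring
  -- integrability of e² and bound term
  have hemeas : Measurable e := by
    have : e = fun ω => -(inner ℝ g (Δ ω) : ℝ) + r ω := funext he
    rw [this]
    exact (measurable_const.inner hΔmeas).neg.add hrmeas
  have hIntbound : Integrable fun ω => 2 * C * ‖g‖ * ‖Δ ω‖ ^ 3 + C ^ 2 * ‖Δ ω‖ ^ 4 :=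
    (hInt3.const_mul _).add (hΔ4.const_mul _)
  have hInte2 : Integrable fun ω => (e ω)^2 := by
    refine ((hInt2.const_mul (2*‖g‖^2)).add (hΔ4.const_mul (2*C^2))).mono
      ((hemeas.pow_const 2).aestronglyMeasurable) ?_
    filter_upwards [hr] with ω hrω
    have ha : |(inner ℝ g (Δ ω) : ℝ)| ≤ ‖g‖ * ‖Δ ω‖ := abs_real_inner_le_norm g (Δ ω)
    rw [Real.norm_eq_abs, Real.norm_eq_abs, abs_of_nonneg (sq_nonneg _)]
    have heω := he ω
    have h0 : (0:ℝ) ≤ ‖Δ ω‖ := norm_nonneg _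
    have h1 : |e ω| ≤ ‖g‖ * ‖Δ ω‖ + C * ‖Δ ω‖^2 := by
      rw [heω]
      calc |-(inner ℝ g (Δ ω) : ℝ) + r ω| ≤ |(inner ℝ g (Δ ω) : ℝ)| + |r ω| := by
            rw [← abs_neg (inner ℝ g (Δ ω) : ℝ)] ; exact abs_add_le _ _
        _ ≤ ‖g‖ * ‖Δ ω‖ + C * ‖Δ ω‖^2 := add_le_add ha hrω
    have h2 : (e ω)^2 ≤ (‖g‖ * ‖Δ ω‖ + C * ‖Δ ω‖^2)^2 := by
      rw [← sq_abs]
      exact pow_le_pow_left₀ (abs_nonneg _) h1 2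
    have h3 : (‖g‖ * ‖Δ ω‖ + C * ‖Δ ω‖^2)^2 ≤ 2*‖g‖^2 * ‖Δ ω‖^2 + 2*C^2 * ‖Δ ω‖^4 := by
      nlinarith [sq_nonneg (‖g‖ * ‖Δ ω‖ - C * ‖Δ ω‖^2)]
    calc (e ω)^2 ≤ 2*‖g‖^2 * ‖Δ ω‖^2 + 2*C^2 * ‖Δ ω‖^4 := le_trans h2 h3
      _ ≤ |2*‖g‖^2 * ‖Δ ω‖^2 + 2*C^2 * ‖Δ ω‖^4| := le_abs_self _
  -- pointwise a.e. bound
  have hpt : ∀ᵐ ω, (inner ℝ g (Δ ω) : ℝ)^2 ≤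
      (e ω)^2 + (2 * C * ‖g‖ * ‖Δ ω‖ ^ 3 + C ^ 2 * ‖Δ ω‖ ^ 4) := by
    filter_upwards [hr] with ω hrω
    set a := (inner ℝ g (Δ ω) : ℝ) with ha_def
    have ha : |a| ≤ ‖g‖ * ‖Δ ω‖ := abs_real_inner_le_norm g (Δ ω)
    have h0 : (0:ℝ) ≤ ‖Δ ω‖ := norm_nonneg _
    have heω : e ω = -a + r ω := he ω
    have har : a * r ω ≤ C * ‖g‖ * ‖Δ ω‖^3 := by
      calc a * r ω ≤ |a * r ω| := le_abs_self _
        _ = |a| * |r ω| := abs_mul _ _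
        _ ≤ (‖g‖ * ‖Δ ω‖) * (C * ‖Δ ω‖^2) :=
            mul_le_mul ha hrω (abs_nonneg _) (by positivity)
        _ = C * ‖g‖ * ‖Δ ω‖^3 := by ring
    rw [heω]
    nlinarith [sq_nonneg (r ω), mul_nonneg (sq_nonneg C) (pow_nonneg h0 4)]
  have hmono := integral_mono_ae hInta2 (hInte2.add hIntbound) hpt
  simp only [Pi.add_apply] at hmono
  rw [integral_add hInte2 hIntbound] at hmono
  rw [← hEa2]
  exact hmono
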